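/- For all integers N ≥ 5, d, v, w with w ≥ 2^(N-1) - 1, v ≥ 2w + 1, and d ≥ 2v + 1, we have ⌈(d-1)/N⌉ - ⌊(d-v-1)/(v-w)⌋ - ⌊(v-2)/(N-1)⌋ ≥ 3. -/

import Mathlib

lemma aux_pow (N : ℕ) (h5 : 5 ≤ N) :
    5 * (N : ℤ) ^ 2 - 7 * N ≤ (2 ^ N - 1) * ((N : ℤ) - 2) := by
  induction N, h5 using Nat.le_induction with
  | base => norm_num
  | succ n hn ih =>
    have h32 : (32 : ℤ) ≤ 2 ^ n := by
      calc (32 : ℤ) = 2 ^ 5 := by norm_num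
        _ ≤ 2 ^ n := pow_le_pow_right₀ (by norm_num) hn
    have hn' : (5 : ℤ) ≤ (n : ℤ) := by exact_mod_cast hn
    have hprod : (0 : ℤ) ≤ (2 ^ n - 32) * (n : ℤ) :=
      mul_nonneg (by linarith) (by linarith)
    have hps : (2:ℤ)^(n+1) = 2^n * 2 := pow_succ 2 n
    push_cast
    nlinarith [ih, h32, hn', hprod, hps]

theorem stmt_0 (N : ℕ) (d v w : ℤ) (hN : 5 ≤ N)
    (hw : (2 : ℤ) ^ (N - 1) - 1 ≤ w) (hv : 2 * w + 1 ≤ v) (hd : 2 * v + 1 ≤ d) :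
    ⌈((d : ℚ) - 1) / N⌉ - ⌊((d : ℚ) - v - 1) / (v - w)⌋ - ⌊((v : ℚ) - 2) / (N - 1)⌋ ≥ 3 := by
  have hN4 : 4 ≤ N - 1 := by omega
  have hpw : (16 : ℤ) ≤ 2 ^ (N - 1) := by
    calc (16 : ℤ) = 2 ^ 4 := by norm_num
      _ ≤ 2 ^ (N - 1) := pow_le_pow_right₀ (by norm_num) hN4
  have hw15 : (15 : ℤ) ≤ w := by linarith
  have hNle : (N : ℤ) ≤ 2 ^ (N - 1) := by
    have h1 : N - 1 < 2 ^ (N - 1) := (N - 1).lt_two_pow_self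
    have h2 : N ≤ 2 ^ (N - 1) := by omega
    exact_mod_cast h2
  have hnZ : (5 : ℤ) ≤ (N : ℤ) := by exact_mod_cast hN
  have hvw : (N : ℤ) ≤ v - w := by linarith
  have hpow2 : (2 : ℤ) ^ N = 2 * 2 ^ (N - 1) := by
    rw [← pow_succ']
    congr 1
    omega
  have hv2 : (2 : ℤ) ^ N - 1 ≤ v := by linarith
  have haux := aux_pow N hN
  have hvn : 5 * (N : ℤ) ^ 2 - 7 * N ≤ v * ((N : ℤ) - 2) := by
    have h1 : ((2 : ℤ) ^ N - 1) * ((N : ℤ) - 2) ≤ v * ((N : ℤ) - 2) :=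
      mul_le_mul_of_nonneg_right hv2 (by linarith)
    linarith
  set n : ℤ := (N : ℤ) with hn
  have hT1 : 0 ≤ (d - 2 * v - 1) * ((v - w) * (n - 1) - n * (n - 1)) := by
    apply mul_nonneg (by linarith)
    have h := mul_nonneg (by linarith : (0 : ℤ) ≤ v - w - n) (by linarith : (0 : ℤ) ≤ n - 1)
    nlinarith [h]
  have hC : 2 * n ^ 2 - 2 * n ≤ v * (n - 2) + 5 * n - 3 * n ^ 2 := by nlinarith [hvn]
  have hT2 : 0 ≤ (2 * (v - w) - (v + 1)) * (v * (n - 2) + 5 * n - 3 * n ^ 2) :=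
    mul_nonneg (by linarith) (by nlinarith [hC, hnZ])
  have hT3 : 0 ≤ (v + 1) * ((v * (n - 2) + 5 * n - 3 * n ^ 2) - (2 * n ^ 2 - 2 * n)) :=
    mul_nonneg (by linarith) (by linarith)
  have hE : 0 ≤ (d - 1) * ((v - w) * (n - 1)) - (d - v - 1) * (n * (n - 1))
      - (v - 2) * (n * (v - w)) - 3 * (n * ((v - w) * (n - 1))) := by
    nlinarith [hT1, hT2, hT3, hnZ]
  -- move to ℚ
  have hPq : (0 : ℚ) < (N : ℚ) := by exact_mod_cast (by omega : 0 < N)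
  have hQq : (0 : ℚ) < (v : ℚ) - (w : ℚ) := by
    have : (0 : ℤ) < v - w := by linarith
    push_cast
    exact_mod_cast this
  have hRq : (0 : ℚ) < (N : ℚ) - 1 := by
    have : (1 : ℚ) < (N : ℚ) := by exact_mod_cast (by omega : 1 < N)
    linarith
  have hEq : (0 : ℚ) ≤ ((d : ℚ) - 1) * (((v : ℚ) - w) * ((N : ℚ) - 1))
      - ((d : ℚ) - v - 1) * ((N : ℚ) * ((N : ℚ) - 1))
      - ((v : ℚ) - 2) * ((N : ℚ) * ((v : ℚ) - w))
      - 3 * ((N : ℚ) * (((v : ℚ) - w) * ((N : ℚ) - 1))) := by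
    have := hE
    push_cast at this ⊢
    exact_mod_cast this
  have key : (3 : ℚ) ≤ ((d : ℚ) - 1) / (N : ℚ) - ((d : ℚ) - v - 1) / ((v : ℚ) - w)
      - ((v : ℚ) - 2) / ((N : ℚ) - 1) := by
    have hden : (0 : ℚ) < (N : ℚ) * (((v : ℚ) - w) * ((N : ℚ) - 1)) := by positivity
    have heq2 : ((d : ℚ) - 1) / (N : ℚ) - ((d : ℚ) - v - 1) / ((v : ℚ) - w)
        - ((v : ℚ) - 2) / ((N : ℚ) - 1) - 3 =
        (((d : ℚ) - 1) * (((v : ℚ) - w) * ((N : ℚ) - 1))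
          - ((d : ℚ) - v - 1) * ((N : ℚ) * ((N : ℚ) - 1))
          - ((v : ℚ) - 2) * ((N : ℚ) * ((v : ℚ) - w))
          - 3 * ((N : ℚ) * (((v : ℚ) - w) * ((N : ℚ) - 1))))
          / ((N : ℚ) * (((v : ℚ) - w) * ((N : ℚ) - 1))) := by
      field_simp
    have hnn := div_nonneg hEq (le_of_lt hden)
    linarith [heq2 ▸ hnn]
  have h1 : ((d : ℚ) - 1) / (N : ℚ) ≤ (⌈((d : ℚ) - 1) / N⌉ : ℚ) := Int.le_ceil _
  have h2 : (⌊((d : ℚ) - v - 1) / (v - w)⌋ : ℚ) ≤ ((d : ℚ) - v - 1) / ((v : ℚ) - w) :=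
    Int.floor_le _
  have h3 : (⌊((v : ℚ) - 2) / (N - 1)⌋ : ℚ) ≤ ((v : ℚ) - 2) / ((N : ℚ) - 1) :=
    Int.floor_le _
  have hfin : (3 : ℚ) ≤ (⌈((d : ℚ) - 1) / N⌉ : ℚ) - (⌊((d : ℚ) - v - 1) / (v - w)⌋ : ℚ)
      - (⌊((v : ℚ) - 2) / (N - 1)⌋ : ℚ) := by linarith
  exact_mod_cast hfin
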